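/- Let n ≥ 1, let χ be a primitive Dirichlet character modulo n, let u ∈ ℤ/nℤ, and let l ≥ 1 be an integer. Then ∑_{σ ∈ (ℤ/nℤ)ˣ} χ(σ) · ( 2·ζ_L′(e^{2πi uσ/n}, 1−l) + H_{l−1} · ζ_L(e^{2πi uσ/n}, 1−l) ) = τ(χ) · χ̄(u) · ( 2·L′(χ̄, 1−l) + H_{l−1} · L(χ̄, 1−l) ), where ζ_L′ and L′ denote derivatives with respect to s of the analytically continued Lerch zeta function and Dirichlet L-function, H_{l−1} = 1 + 1/2 + ⋯ + 1/(l−1) is the (l−1)-st harmonic number (H_0 = 0), and τ(χ) = ∑_{σ ∈ (ℤ/nℤ)ˣ} e^{2πiσ/n} χ(σ). -/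

import Mathlib

open Complex HurwitzZeta Finset ZMod AddChar

private lemma sum_zmod_eq_sum_units {n : ℕ} [NeZero n] (f : ZMod n → ℂ)
    (hf : ∀ a : ZMod n, ¬IsUnit a → f a = 0) :
    ∑ a : ZMod n, f a = ∑ u : (ZMod n)ˣ, f u := by
  classical
  rw [← Finset.sum_filter_of_ne (p := fun a : ZMod n => IsUnit a)
    (fun x _ h => by by_contra hx; exact h (hf x hx))]
  have himg : Finset.univ.filter (fun a : ZMod n => IsUnit a)
      = Finset.univ.image (fun u : (ZMod n)ˣ => (u : ZMod n)) := by
    ext a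
    simp [IsUnit]
    exact Finset.mem_filter.trans (and_iff_right (Finset.mem_univ _))
  rw [himg, Finset.sum_image (fun u _ v _ h => Units.ext h)]

private lemma conj_comp_eq_inv {n : ℕ} [NeZero n] (χ : DirichletCharacter ℂ n) :
    χ.ringHomComp (starRingEnd ℂ) = χ⁻¹ := MulChar.star_eq_inv χ

private lemma key {n : ℕ} [NeZero n] (χ : DirichletCharacter ℂ n) (hχ : χ.IsPrimitive)
    (u : ZMod n) {s : ℂ} (hs : s ≠ 1) :
    ∑ σ : (ZMod n)ˣ, χ (σ : ZMod n) * expZeta (ZMod.toAddCircle (u * (σ : ZMod n))) s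
      = gaussSum χ stdAddChar * χ⁻¹ u * DirichletCharacter.LFunction χ⁻¹ s := by
  have h1 : ∀ σ : (ZMod n)ˣ, expZeta (ZMod.toAddCircle (u * (σ : ZMod n))) s
      = ZMod.LFunction (fun k => stdAddChar (u * (σ : ZMod n) * k)) s :=
    fun σ => (ZMod.LFunction_stdAddChar_eq_expZeta _ _ (Or.inr hs)).symm
  have h2 : ∀ j : ZMod n, (∑ σ : (ZMod n)ˣ, χ (σ : ZMod n) * stdAddChar (u * (σ : ZMod n) * j))
      = gaussSum χ stdAddChar * (χ⁻¹ u * χ⁻¹ j) := by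
    intro j
    have e1 : ∑ σ : (ZMod n)ˣ, χ (σ : ZMod n) * stdAddChar (u * (σ : ZMod n) * j)
        = ∑ a : ZMod n, χ a * (stdAddChar.mulShift (u * j)) a := by
      rw [sum_zmod_eq_sum_units _ (fun a ha => by rw [χ.map_nonunit ha, zero_mul])]
      exact Finset.sum_congr rfl fun σ _ => by rw [AddChar.mulShift_apply]; ring_nf
    rw [e1, show (∑ a : ZMod n, χ a * (stdAddChar.mulShift (u * j)) a)
        = gaussSum χ (stdAddChar.mulShift (u * j)) from rfl,
      gaussSum_mulShift_of_isPrimitive _ hχ, map_mul]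
    ring
  calc ∑ σ : (ZMod n)ˣ, χ (σ : ZMod n) * expZeta (ZMod.toAddCircle (u * (σ : ZMod n))) s
      = (n : ℂ) ^ (-s) * ∑ j : ZMod n,
          (∑ σ : (ZMod n)ˣ, χ (σ : ZMod n) * stdAddChar (u * (σ : ZMod n) * j)) *
            hurwitzZeta (ZMod.toAddCircle j) s := by
        simp only [h1, ZMod.LFunction, Finset.mul_sum, Finset.sum_mul]
        rw [Finset.sum_comm]
        exact Finset.sum_congr rfl fun j _ => Finset.sum_congr rfl fun σ _ => by ring
    _ = gaussSum χ stdAddChar * χ⁻¹ u * DirichletCharacter.LFunction χ⁻¹ s := by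
        simp only [h2, DirichletCharacter.LFunction, ZMod.LFunction, Finset.mul_sum]
        exact Finset.sum_congr rfl fun j _ => by ring

theorem gauss_sum_lerch_deriv
    (n : ℕ) [NeZero n] (hn : 1 ≤ n)
    (χ : DirichletCharacter ℂ n) (hχ : χ.IsPrimitive)
    (u : ZMod n) (l : ℕ) (hl : 1 ≤ l) :
    ∑ σ : (ZMod n)ˣ,
        χ (σ : ZMod n) *
          (2 * deriv (expZeta ((((u * (σ : ZMod n)).val : ℝ) / n : ℝ) : UnitAddCircle))
              (1 - (l : ℂ)) +
            (harmonic (l - 1) : ℂ) *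
              expZeta ((((u * (σ : ZMod n)).val : ℝ) / n : ℝ) : UnitAddCircle) (1 - (l : ℂ)))
      = (∑ σ : (ZMod n)ˣ,
            Complex.exp (2 * Real.pi * Complex.I * (((σ : ZMod n)).val : ℂ) / n) *
              χ (σ : ZMod n)) *
          (starRingEnd ℂ) (χ u) *
          (2 * deriv (DirichletCharacter.LFunction (χ.ringHomComp (starRingEnd ℂ)))
              (1 - (l : ℂ)) +
            (harmonic (l - 1) : ℂ) *
              DirichletCharacter.LFunction (χ.ringHomComp (starRingEnd ℂ)) (1 - (l : ℂ))) := by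
  have hl0 : (l : ℂ) ≠ 0 := Nat.cast_ne_zero.mpr (by omega)
  have hs : (1 : ℂ) - l ≠ 1 := fun h => hl0 (by linear_combination -h)
  simp only [← ZMod.toAddCircle_apply]
  rw [conj_comp_eq_inv]
  have hconj : (starRingEnd ℂ) (χ u) = χ⁻¹ u := MulChar.star_apply' χ u
  have hgs : (∑ σ : (ZMod n)ˣ,
      Complex.exp (2 * Real.pi * Complex.I * (((σ : ZMod n)).val : ℂ) / n) * χ (σ : ZMod n))
      = gaussSum χ stdAddChar := by
    rw [gaussSum, sum_zmod_eq_sum_units _ (fun a ha => by rw [χ.map_nonunit ha, zero_mul])]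
    refine Finset.sum_congr rfl fun σ _ => ?_
    rw [stdAddChar_apply, ZMod.toCircle_apply]
    ring
  set c := gaussSum χ stdAddChar * χ⁻¹ u with hc
  set F := fun s : ℂ => ∑ σ : (ZMod n)ˣ,
      χ (σ : ZMod n) * expZeta (ZMod.toAddCircle (u * (σ : ZMod n))) s with hF
  have hFG : Set.EqOn F (fun s => c * DirichletCharacter.LFunction χ⁻¹ s) {s | s ≠ 1} :=
    fun s hsne => by simp only [hF, hc]; exact key χ hχ u hsne
  have hmem : {s : ℂ | s ≠ 1} ∈ nhds (1 - (l : ℂ)) := isOpen_compl_singleton.mem_nhds hs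
  have hev : F =ᶠ[nhds (1 - (l : ℂ))] fun s => c * DirichletCharacter.LFunction χ⁻¹ s :=
    Filter.eventuallyEq_of_mem hmem hFG
  have hdF : deriv F (1 - (l : ℂ)) = ∑ σ : (ZMod n)ˣ,
      χ (σ : ZMod n) * deriv (expZeta (ZMod.toAddCircle (u * (σ : ZMod n)))) (1 - (l : ℂ)) := by
    rw [hF, deriv_fun_sum (fun σ _ => (differentiableAt_expZeta _ _ (Or.inl hs)).const_mul _)]
    exact Finset.sum_congr rfl fun σ _ =>
      deriv_const_mul _ (differentiableAt_expZeta _ _ (Or.inl hs))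
  have hdG : deriv (fun s => c * DirichletCharacter.LFunction χ⁻¹ s) (1 - (l : ℂ))
      = c * deriv (DirichletCharacter.LFunction χ⁻¹) (1 - (l : ℂ)) :=
    deriv_const_mul _ (DirichletCharacter.differentiableAt_LFunction _ _ (Or.inl hs))
  have hderiv : deriv F (1 - (l : ℂ))
      = c * deriv (DirichletCharacter.LFunction χ⁻¹) (1 - (l : ℂ)) := by
    rw [hev.deriv_eq, hdG]
  have hval : F (1 - (l : ℂ)) = c * DirichletCharacter.LFunction χ⁻¹ (1 - (l : ℂ)) :=
    hFG hs
  have expand : ∑ σ : (ZMod n)ˣ,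
      χ (σ : ZMod n) *
        (2 * deriv (expZeta (ZMod.toAddCircle (u * (σ : ZMod n)))) (1 - (l : ℂ)) +
          (harmonic (l - 1) : ℂ) *
            expZeta (ZMod.toAddCircle (u * (σ : ZMod n))) (1 - (l : ℂ)))
      = 2 * (∑ σ : (ZMod n)ˣ,
          χ (σ : ZMod n) * deriv (expZeta (ZMod.toAddCircle (u * (σ : ZMod n)))) (1 - (l : ℂ)))
        + (harmonic (l - 1) : ℂ) * F (1 - (l : ℂ)) := by
    rw [hF, Finset.mul_sum, Finset.mul_sum, ← Finset.sum_add_distrib]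
    exact Finset.sum_congr rfl fun σ _ => by ring
  rw [expand, ← hdF, hderiv, hval, hgs, hconj]
  ring
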